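/- If θ̄ ≥ 8a/(27Rb) (the supercritical regime, in which v ↦ p(v,θ̄) is strictly decreasing on (b,∞)), then Φ(v) > 0 for every v ∈ (b, ∞) with v ≠ v̄. -/
import Mathlib


/-- The energy function
`Φ(v) = (1/θ̄)[(Rθ̄/(v̄−b) − a/v̄²)(v − v̄) − (a/v − a/v̄) − Rθ̄ ln((v−b)/(v̄−b))]`. -/
noncomputable def PhiVdw (a b R vbar θbar v : ℝ) : ℝ :=
  (1 / θbar) * ((R * θbar / (vbar - b) - a / vbar ^ 2) * (v - vbar)
    - (a / v - a / vbar) - R * θbar * Real.log ((v - b) / (vbar - b)))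

lemma vdw_key (b v1 v2 : ℝ) (hb : 0 < b) (h1 : b < v1) (h12 : v1 < v2) :
    27*b*(v1+v2)*(v1-b)*(v2-b) < 8*v1^2*v2^2 := by
  have hsqpos : 0 < (v1 - v2)^2 := by
    apply sq_pos_of_ne_zero; intro h; nlinarith
  rcases le_or_gt (v1+v2) (27*b/4) with hA | hB
  · have h2 : 27*b*(v1+v2) - 2*(v1+v2)^2 - 8*(v1*v2) > 0 := by nlinarith
    have hprod : 0 < ((v1+v2)^2 - 4*(v1*v2)) * (27*b*(v1+v2) - 2*(v1+v2)^2 - 8*(v1*v2)) := by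
      apply mul_pos (by nlinarith) h2
    have hC : 0 ≤ (v1+v2)*((v1+v2)-6*b)^2*(2*(v1+v2)-3*b) := by
      apply mul_nonneg (mul_nonneg (by linarith) (sq_nonneg _)); linarith
    nlinarith [hprod, hC]
  · have hsq2 : 0 ≤ (16*(v1*v2) - 27*b*(v1+v2))^2 := sq_nonneg _
    have h5 : 0 < b^2 * (v1+v2) * (5*(v1+v2) - 32*b) := by
      apply mul_pos (mul_pos (by positivity) (by linarith)); linarith
    nlinarith [hsq2, h5]

/-- Strict decrease of the van der Waals pressure in the supercritical regime. -/
lemma vdw_p_strictAnti (a b R θbar v1 v2 : ℝ) (ha : 0 < a) (hb : 0 < b)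
    (hK : 8 * a ≤ 27 * b * (R * θbar)) (h1 : b < v1) (h12 : v1 < v2) :
    R * θbar / (v2 - b) - a / v2 ^ 2 < R * θbar / (v1 - b) - a / v1 ^ 2 := by
  have h2 : b < v2 := h1.trans h12
  have h1b : (0:ℝ) < v1 - b := by linarith
  have h2b : (0:ℝ) < v2 - b := by linarith
  have hv1 : (0:ℝ) < v1 := hb.trans h1
  have hv2 : (0:ℝ) < v2 := hb.trans h2
  have hk := vdw_key b v1 v2 hb h1 h12
  have hN : a * ((v1+v2)*(v1-b)*(v2-b)) < (R*θbar) * (v1^2*v2^2) := by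
    have hpos : 0 < (v1+v2)*(v1-b)*(v2-b) := by positivity
    nlinarith [mul_pos hv1 hv2, hk, mul_pos (mul_pos hv1 hv1) (mul_pos hv2 hv2)]
  have e : (R*θbar/(v1-b) - a/v1^2) - (R*θbar/(v2-b) - a/v2^2)
      = ((v2 - v1) * ((R*θbar) * (v1^2*v2^2) - a*((v1+v2)*(v1-b)*(v2-b))))
        / ((v1-b)*(v2-b)*(v1^2*v2^2)) := by
    field_simp
    ring
  have hlt : 0 < (R*θbar/(v1-b) - a/v1^2) - (R*θbar/(v2-b) - a/v2^2) := by
    rw [e]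
    apply div_pos (mul_pos (by linarith) (by linarith)) (by positivity)
  linarith

lemma hasDerivAt_PhiVdw (a b R vbar θbar v : ℝ) (hb : 0 < b) (hθbar : 0 < θbar)
    (hvbar : b < vbar) (hv : b < v) :
    HasDerivAt (PhiVdw a b R vbar θbar)
      ((1/θbar) * ((R * θbar / (vbar - b) - a / vbar ^ 2)
        - (R * θbar / (v - b) - a / v ^ 2))) v := by
  have hv0 : v ≠ 0 := ne_of_gt (hb.trans hv)
  have hvb : (0:ℝ) < v - b := by linarith
  have hvbarb : (0:ℝ) < vbar - b := by linarith
  have hfrac : (v - b) / (vbar - b) ≠ 0 := by positivity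
  have h1 : HasDerivAt (fun y : ℝ => (R * θbar / (vbar - b) - a / vbar ^ 2) * (y - vbar))
      (R * θbar / (vbar - b) - a / vbar ^ 2) v := by
    simpa using ((hasDerivAt_id v).sub_const vbar).const_mul
      (R * θbar / (vbar - b) - a / vbar ^ 2)
  have h2 : HasDerivAt (fun y : ℝ => a / y - a / vbar) (a * -(v ^ 2)⁻¹) v := by
    simpa [div_eq_mul_inv] using ((hasDerivAt_inv hv0).const_mul a).sub_const (a / vbar)
  have hf : HasDerivAt (fun y : ℝ => (y - b) / (vbar - b)) (1 / (vbar - b)) v := by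
    simpa using ((hasDerivAt_id v).sub_const b).div_const (vbar - b)
  have h3 : HasDerivAt (fun y : ℝ => R * θbar * Real.log ((y - b) / (vbar - b)))
      (R * θbar * ((1 / (vbar - b)) / ((v - b) / (vbar - b)))) v :=
    (hf.log hfrac).const_mul (R * θbar)
  have h := ((h1.sub h2).sub h3).const_mul (1/θbar)
  have heq : (1/θbar) * ((R * θbar / (vbar - b) - a / vbar ^ 2) - a * -(v ^ 2)⁻¹
      - R * θbar * ((1 / (vbar - b)) / ((v - b) / (vbar - b))))
      = (1/θbar) * ((R * θbar / (vbar - b) - a / vbar ^ 2)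
        - (R * θbar / (v - b) - a / v ^ 2)) := by
    have : (1 / (vbar - b)) / ((v - b) / (vbar - b)) = 1 / (v - b) := by
      field_simp
    rw [this]
    ring
  rw [heq] at h
  exact h

/-- In the supercritical regime `θ̄ ≥ 8a/(27Rb)` (where `v ↦ p(v,θ̄)` is
strictly decreasing on `(b,∞)`), `Φ(v) > 0` for every `v ∈ (b,∞)` with `v ≠ v̄`. -/
theorem PhiVdw_pos_supercritical
    (a b R vbar θbar : ℝ) (ha : 0 < a) (hb : 0 < b) (hR : 0 < R)
    (hvbar : b < vbar) (hθbar : 0 < θbar)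
    (hsup : 8 * a / (27 * R * b) ≤ θbar) :
    ∀ v, b < v → v ≠ vbar → 0 < PhiVdw a b R vbar θbar v := by
  have hK : 8 * a ≤ 27 * b * (R * θbar) := by
    have := (div_le_iff₀ (by positivity : (0:ℝ) < 27 * R * b)).1 hsup
    nlinarith
  have hPhibar : PhiVdw a b R vbar θbar vbar = 0 := by
    unfold PhiVdw
    rw [div_self (sub_ne_zero.2 (ne_of_gt hvbar))]
    simp
  intro v hv hne
  rcases lt_or_gt_of_ne hne with hlt | hgt
  · -- v < vbar : Φ strictly decreasing on [v, vbar]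
    have hanti : StrictAntiOn (PhiVdw a b R vbar θbar) (Set.Icc v vbar) := by
      apply strictAntiOn_of_deriv_neg (convex_Icc v vbar)
      · intro x hx
        have hx' : b < x := lt_of_lt_of_le hv hx.1
        exact (hasDerivAt_PhiVdw a b R vbar θbar x hb hθbar hvbar hx').differentiableAt.continuousAt.continuousWithinAt
      · intro x hx
        rw [interior_Icc] at hx
        have hx' : b < x := hv.trans hx.1
        rw [(hasDerivAt_PhiVdw a b R vbar θbar x hb hθbar hvbar hx').deriv]
        have := vdw_p_strictAnti a b R θbar x vbar ha hb hK hx' hx.2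
        have h1θ : 0 < 1/θbar := by positivity
        nlinarith
    have := hanti (Set.left_mem_Icc.2 hlt.le) (Set.right_mem_Icc.2 hlt.le) hlt
    rw [hPhibar] at this
    exact this
  · -- vbar < v : Φ strictly increasing on [vbar, v]
    have hmono : StrictMonoOn (PhiVdw a b R vbar θbar) (Set.Icc vbar v) := by
      apply strictMonoOn_of_deriv_pos (convex_Icc vbar v)
      · intro x hx
        have hx' : b < x := lt_of_lt_of_le hvbar hx.1
        exact (hasDerivAt_PhiVdw a b R vbar θbar x hb hθbar hvbar hx').differentiableAt.continuousAt.continuousWithinAt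
      · intro x hx
        rw [interior_Icc] at hx
        have hx' : b < x := hvbar.trans hx.1
        rw [(hasDerivAt_PhiVdw a b R vbar θbar x hb hθbar hvbar hx').deriv]
        have := vdw_p_strictAnti a b R θbar vbar x ha hb hK hvbar hx.1
        have h1θ : 0 < 1/θbar := by positivity
        nlinarith
    have := hmono (Set.left_mem_Icc.2 hgt.le) (Set.right_mem_Icc.2 hgt.le) hgt
    rw [hPhibar] at this
    exact this
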